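/- Assume κ ∈ C^{3r}(Ω), ∂κ/∂u ∈ C^{3r}(Ω), ∂²κ/∂u² is continuous on Ω, and f ∈ C^{3r}[a,b]. Let δ₀ > 0, let φ : [a,b] → ℝ be bounded, and let c₀ > 0. Fix an integer p ≥ 1 and set m = n·p. Then there exists a constant C, independent of n and m, such that for every n ≥ 1, every solution φ_m ∈ B(φ,δ₀) of x − K_m(x) = f satisfying ‖Q_n φ_m − φ_m‖_∞ ≤ min{δ₀, c₀·h^r}, and every bounded function v : [a,b] → ℝ: ‖K_m'(φ_m)(((K̃_n^M)'(φ_m) − K_m'(φ_m))v)‖_∞ ≤ C · h^r · ‖v‖_∞. Consequently, for any bounded z with ‖z − φ_m‖_∞ ≤ c₁·max{h̃^d, h^{3r}}: ‖K_m'(φ_m)(((K̃_n^M)'(φ_m) − K_m'(φ_m))(z − φ_m))‖_∞ ≤ C·c₁ · h^r · max{h̃^d, h^{3r}}. -/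

import Mathlib

open Set

noncomputable section

/-- Supremum of `|x|` over `[a, b]`. -/
def supIcc (a b : ℝ) (x : ℝ → ℝ) : ℝ := ⨆ t : Set.Icc a b, |x t.1|

/-- `x` is bounded on `[a, b]`. -/
def BddIcc (a b : ℝ) (x : ℝ → ℝ) : Prop := ∃ M, ∀ t ∈ Set.Icc a b, |x t| ≤ M

/-- The quadrature rule `(w, μ)` on `[0,1]` has degree of precision at least `k`:
it integrates exactly all polynomials of degree at most `k`. -/
def Precision {ρ : ℕ} (w μ : Fin ρ → ℝ) (k : ℕ) : Prop :=
  ∀ P : Polynomial ℝ, P.natDegree ≤ k →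
    ∑ i, w i * P.eval (μ i) = ∫ t in (0:ℝ)..1, P.eval t

/-- `Ψ(t) = ∏ i (t - q i)`. -/
def Psi {r : ℕ} (q : Fin r → ℝ) (t : ℝ) : ℝ := ∏ i, (t - q i)

/-- `q` lists the Gauss points of order `r` in `(0,1)`. -/
def GaussPts {r : ℕ} (q : Fin r → ℝ) : Prop :=
  StrictMono q ∧ (∀ i, q i ∈ Set.Ioo (0:ℝ) 1) ∧
    ∀ j, j < r → ∫ t in (0:ℝ)..1, t ^ j * Psi q t = 0

/-- Quadrature nodes `ζ_i^{j+1}` of the composite rule, `j = 0, …, m-1`. -/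
def qNode {ρ : ℕ} (a b : ℝ) (μ : Fin ρ → ℝ) (m j : ℕ) (i : Fin ρ) : ℝ :=
  a + (j : ℝ) * ((b - a) / m) + μ i * ((b - a) / m)

/-- Nyström operator, linear kernel. -/
def nystL {ρ : ℕ} (a b : ℝ) (w μ : Fin ρ → ℝ) (m : ℕ) (κ : ℝ → ℝ → ℝ) (x : ℝ → ℝ) :
    ℝ → ℝ := fun s =>
  ((b - a) / m) *
    ∑ j ∈ Finset.range m, ∑ i, w i * κ s (qNode a b μ m j i) * x (qNode a b μ m j i)

/-- Nyström operator, Urysohn kernel. -/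
def nystU {ρ : ℕ} (a b : ℝ) (w μ : Fin ρ → ℝ) (m : ℕ) (κ : ℝ → ℝ → ℝ → ℝ) (x : ℝ → ℝ) :
    ℝ → ℝ := fun s =>
  ((b - a) / m) *
    ∑ j ∈ Finset.range m, ∑ i, w i * κ s (qNode a b μ m j i) (x (qNode a b μ m j i))

/-- Fréchet derivative `K_m'(x) v` of the Nyström operator. -/
def nystU' {ρ : ℕ} (a b : ℝ) (w μ : Fin ρ → ℝ) (m : ℕ) (κ : ℝ → ℝ → ℝ → ℝ) (x v : ℝ → ℝ) :
    ℝ → ℝ := fun s =>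
  ((b - a) / m) *
    ∑ j ∈ Finset.range m, ∑ i,
      w i * deriv (κ s (qNode a b μ m j i)) (x (qNode a b μ m j i)) * v (qNode a b μ m j i)

/-- Collocation nodes `τ_i^{k+1}`, `k = 0, …, n-1`. -/
def cNode {r : ℕ} (a b : ℝ) (q : Fin r → ℝ) (n k : ℕ) (i : Fin r) : ℝ :=
  a + (k : ℝ) * ((b - a) / n) + q i * ((b - a) / n)

/-- Index of the subinterval of the uniform partition of `[a,b]` containing `t`. -/
def iIdx (a b : ℝ) (n : ℕ) (t : ℝ) : ℕ :=
  min (n - 1) (⌊(t - a) / ((b - a) / n)⌋.toNat)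

/-- Piecewise-polynomial interpolatory projection at the `r` Gauss points of each
subinterval of the uniform partition of `[a,b]` into `n` parts. -/
def projQ {r : ℕ} (a b : ℝ) (q : Fin r → ℝ) (n : ℕ) (x : ℝ → ℝ) : ℝ → ℝ := fun t =>
  (Lagrange.interpolate Finset.univ (cNode a b q n (iIdx a b n t))
    fun i => x (cNode a b q n (iIdx a b n t) i)).eval t

/-- Discrete modified projection operator, linear case. -/
def modL {ρ r : ℕ} (a b : ℝ) (w μ : Fin ρ → ℝ) (q : Fin r → ℝ) (n m : ℕ)
    (κ : ℝ → ℝ → ℝ) (x : ℝ → ℝ) : ℝ → ℝ :=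
  projQ a b q n (nystL a b w μ m κ x) + nystL a b w μ m κ (projQ a b q n x)
    - projQ a b q n (nystL a b w μ m κ (projQ a b q n x))

/-- Discrete modified projection operator, Urysohn case. -/
def modU {ρ r : ℕ} (a b : ℝ) (w μ : Fin ρ → ℝ) (q : Fin r → ℝ) (n m : ℕ)
    (κ : ℝ → ℝ → ℝ → ℝ) (x : ℝ → ℝ) : ℝ → ℝ :=
  projQ a b q n (nystU a b w μ m κ x) + nystU a b w μ m κ (projQ a b q n x)
    - projQ a b q n (nystU a b w μ m κ (projQ a b q n x))

/-- Fréchet derivative of `modU` at `x`, applied to `v`. -/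
def modU' {ρ r : ℕ} (a b : ℝ) (w μ : Fin ρ → ℝ) (q : Fin r → ℝ) (n m : ℕ)
    (κ : ℝ → ℝ → ℝ → ℝ) (x v : ℝ → ℝ) : ℝ → ℝ :=
  projQ a b q n (nystU' a b w μ m κ x v)
    + nystU' a b w μ m κ (projQ a b q n x) (projQ a b q n v)
    - projQ a b q n (nystU' a b w μ m κ (projQ a b q n x) (projQ a b q n v))

/-- `‖x‖_{k,∞}`. -/
def CkNorm (a b : ℝ) (k : ℕ) (x : ℝ → ℝ) : ℝ :=
  ⨆ p : Fin (k + 1) × Set.Icc a b, |iteratedDeriv (p.1 : ℕ) x p.2.1|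

/-- Mixed partial derivative `∂^{i+j} κ / ∂s^i ∂t^j`. -/
def pder (i j : ℕ) (κ : ℝ → ℝ → ℝ) (s t : ℝ) : ℝ :=
  iteratedDeriv i (fun s' => iteratedDeriv j (κ s') t) s

/-- `‖κ‖_{k,∞}`. -/
def kerNorm (a b : ℝ) (k : ℕ) (κ : ℝ → ℝ → ℝ) : ℝ :=
  ⨆ p : {ij : ℕ × ℕ // ij.1 + ij.2 ≤ k} × (Set.Icc a b × Set.Icc a b),
    |pder p.1.1.1 p.1.1.2 κ p.2.1.1 p.2.2.1|

/-- `W = ∑ |w i|`. -/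
def Wsum {ρ : ℕ} (w : Fin ρ → ℝ) : ℝ := ∑ i, |w i|

/-- `∂κ/∂u`, Urysohn kernel. -/
def du (κ : ℝ → ℝ → ℝ → ℝ) (s t u : ℝ) : ℝ := deriv (κ s t) u

/-- `∂²κ/∂u²`, Urysohn kernel. -/
def du2 (κ : ℝ → ℝ → ℝ → ℝ) (s t u : ℝ) : ℝ := deriv (deriv (κ s t)) u

/-- supremum of `|g(s,t,u)|` over `s, t ∈ [a,b]`, `|u| ≤ B`. -/
def supU (a b B : ℝ) (g : ℝ → ℝ → ℝ → ℝ) : ℝ :=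
  ⨆ v : Set.Icc a b × Set.Icc a b × Set.Icc (-B) B, |g v.1.1 v.2.1.1 v.2.2.1|

/-- `∂κ/∂u` exists everywhere and is continuous. -/
def Smooth1 (κ : ℝ → ℝ → ℝ → ℝ) : Prop :=
  (∀ s t : ℝ, Differentiable ℝ (κ s t)) ∧
    Continuous fun v : ℝ × ℝ × ℝ => du κ v.1 v.2.1 v.2.2

/-- `∂²κ/∂u²` exists everywhere and is continuous. -/
def Smooth2 (κ : ℝ → ℝ → ℝ → ℝ) : Prop :=
  (∀ s t : ℝ, Differentiable ℝ (deriv (κ s t))) ∧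
    Continuous fun v : ℝ × ℝ × ℝ => du2 κ v.1 v.2.1 v.2.2








lemma itD_sum {ι : Type*} (s : Finset ι) (f : ι → ℝ → ℝ) (k : ℕ)
    (hf : ∀ i ∈ s, ContDiff ℝ (k : ℕ) (f i)) (x : ℝ) :
    iteratedDeriv k (fun t => ∑ i ∈ s, f i t) x = ∑ i ∈ s, iteratedDeriv k (f i) x := by
  have h := iteratedFDeriv_sum (𝕜 := ℝ) (f := f) (u := s) (i := k) hf
  rw [iteratedDeriv_eq_iteratedFDeriv, h]
  simp [iteratedDeriv_eq_iteratedFDeriv, ContinuousMultilinearMap.sum_apply]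

lemma itD_const_mul (k : ℕ) (c : ℝ) (f : ℝ → ℝ) (hf : ContDiff ℝ (k : ℕ) f) (x : ℝ) :
    iteratedDeriv k (fun t => c * f t) x = c * iteratedDeriv k f x := by
  rw [← iteratedDerivWithin_univ, ← iteratedDerivWithin_univ]
  exact iteratedDerivWithin_const_mul (Set.mem_univ x) uniqueDiffOn_univ c hf.contDiffWithinAt

/-- Iterated partial derivative in the first variable. -/
def pd1 : ℕ → ((ℝ × ℝ × ℝ) → ℝ) → (ℝ × ℝ × ℝ) → ℝ
  | 0, G => G
  | (k+1), G => fun v => fderiv ℝ (pd1 k G) v (1, 0, 0)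

lemma pd1_contDiff {N k : ℕ} (G : (ℝ × ℝ × ℝ) → ℝ) (hG : ContDiff ℝ (N : ℕ) G)
    (hk : k ≤ N) : ContDiff ℝ ((N - k : ℕ) : ℕ) (pd1 k G) := by
  induction k with
  | zero => simpa [pd1] using hG
  | succ k ih =>
    have hkN : k ≤ N := le_of_lt (lt_of_lt_of_le (Nat.lt_succ_self k) hk)
    have ih' := ih hkN
    have hcast : ((N - (k+1) : ℕ) : WithTop ℕ∞) + 1 ≤ ((N - k : ℕ) : WithTop ℕ∞) := by
      have : (N - (k+1) : ℕ) + 1 = (N - k : ℕ) := by omega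
      rw [← this]
      push_cast
      simp
    exact (ih'.fderiv_right hcast).clm_apply contDiff_const

lemma pd1_spec {N k : ℕ} (G : (ℝ × ℝ × ℝ) → ℝ) (hG : ContDiff ℝ (N : ℕ) G)
    (hk : k ≤ N) (t u : ℝ) :
    iteratedDeriv k (fun s => G (s, t, u)) = fun s => pd1 k G (s, t, u) := by
  induction k with
  | zero => simp [pd1, iteratedDeriv_zero]
  | succ k ih =>
    have hkN : k ≤ N := le_of_lt (lt_of_lt_of_le (Nat.lt_succ_self k) hk)
    rw [iteratedDeriv_succ, ih hkN]
    funext s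
    have hdiff : Differentiable ℝ (pd1 k G) := by
      have h1 : (1 : WithTop ℕ∞) ≤ ((N - k : ℕ) : ℕ) := by
        have : 1 ≤ N - k := by omega
        exact_mod_cast Nat.one_le_cast.mpr this
      exact (pd1_contDiff G hG hkN).differentiable (by exact_mod_cast (show N - k ≠ 0 by omega))
    have hA : HasDerivAt (fun s' : ℝ => ((s' : ℝ), (t, u))) ((1:ℝ), ((0:ℝ), (0:ℝ))) s :=
      (hasDerivAt_id s).prodMk (hasDerivAt_const s (t, u))
    have := ((hdiff (s, t, u)).hasFDerivAt.comp_hasDerivAt s hA)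
    simpa [pd1, Function.comp_def] using this.deriv

lemma pd1_continuous {N k : ℕ} (G : (ℝ × ℝ × ℝ) → ℝ) (hG : ContDiff ℝ (N : ℕ) G)
    (hk : k ≤ N) : Continuous (pd1 k G) :=
  (pd1_contDiff G hG hk).continuous









lemma qNode_mem_Icc {ρ : ℕ} {a b : ℝ} (hab : a < b) {μ : Fin ρ → ℝ}
    (hμ : ∀ i, μ i ∈ Set.Ioo (0:ℝ) 1) {m j : ℕ} (hm : 1 ≤ m) (hj : j < m) (i : Fin ρ) :
    qNode a b μ m j i ∈ Set.Icc a b := by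
  have hh : 0 < (b - a) / m :=
    div_pos (sub_pos.mpr hab) (by exact_mod_cast Nat.pos_of_ne_zero (by omega))
  have h1 : (0:ℝ) < μ i := (hμ i).1
  have h2 : μ i < 1 := (hμ i).2
  have hjm : (j : ℝ) + μ i ≤ m := by
    have : (j : ℝ) ≤ (m : ℝ) - 1 := by
      have : (j : ℝ) + 1 ≤ m := by exact_mod_cast Nat.succ_le_of_lt hj
      linarith
    linarith
  constructor
  · have : (0:ℝ) ≤ (j : ℝ) * ((b - a) / m) + μ i * ((b - a) / m) := by positivity
    simp only [qNode]; linarith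
  · have hmne : (m : ℝ) ≠ 0 := by positivity
    have hb : a + (m : ℝ) * ((b - a) / m) = b := by field_simp; ring
    have : (j : ℝ) * ((b - a) / m) + μ i * ((b - a) / m) ≤ (m : ℝ) * ((b - a) / m) := by
      rw [← add_mul]
      exact mul_le_mul_of_nonneg_right hjm hh.le
    simp only [qNode]; linarith

lemma iIdx_facts {a b : ℝ} (hab : a < b) {n : ℕ} (hn : 1 ≤ n) {t : ℝ}
    (ht : t ∈ Set.Icc a b) :
    a ≤ a + (iIdx a b n t : ℝ) * ((b - a) / n) ∧
    (a + (iIdx a b n t : ℝ) * ((b - a) / n)) + (b - a) / n ≤ b ∧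
    a + (iIdx a b n t : ℝ) * ((b - a) / n) ≤ t ∧
    t ≤ (a + (iIdx a b n t : ℝ) * ((b - a) / n)) + (b - a) / n := by
  set h : ℝ := (b - a) / n with hh_def
  have hh : 0 < h :=
    div_pos (sub_pos.mpr hab) (by exact_mod_cast Nat.pos_of_ne_zero (by omega))
  have hnne : (n : ℝ) ≠ 0 := Nat.cast_ne_zero.mpr (by omega)
  have hb : a + (n : ℝ) * h = b := by rw [hh_def]; field_simp; ring
  set z : ℝ := (t - a) / h with hz_def
  have hz0 : 0 ≤ z := by
    apply div_nonneg _ hh.le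
    linarith [ht.1]
  have hzn : z ≤ n := by
    rw [hz_def, div_le_iff₀ hh]
    have := ht.2
    linarith [hb]
  have hfl0 : 0 ≤ ⌊z⌋ := Int.le_floor.mpr (by exact_mod_cast hz0)
  have hcast : ((⌊z⌋.toNat : ℝ)) = (⌊z⌋ : ℝ) := by
    exact_mod_cast congrArg Int.cast (Int.toNat_of_nonneg hfl0)
  set k : ℕ := iIdx a b n t with hk_def
  have hk_le : k ≤ n - 1 := min_le_left _ _
  have hk_cast : (k : ℝ) ≤ (n : ℝ) - 1 := by
    have h1 : (k : ℝ) ≤ ((n - 1 : ℕ) : ℝ) := by exact_mod_cast hk_le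
    have h2 : ((n - 1 : ℕ) : ℝ) = (n : ℝ) - 1 := by
      have : ((n - 1 : ℕ) : ℝ) + 1 = n := by exact_mod_cast Nat.succ_pred_eq_of_pos hn
      linarith
    linarith
  refine ⟨?_, ?_, ?_, ?_⟩
  · nlinarith [Nat.cast_nonneg (α := ℝ) k]
  · have : (k : ℝ) * h + h ≤ (n : ℝ) * h := by nlinarith
    linarith
  · -- a + k h ≤ t
    by_cases hcase : ⌊z⌋.toNat ≤ n - 1
    · have hk_eq : k = ⌊z⌋.toNat := by rw [hk_def, iIdx, min_eq_right hcase]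
      have : (k : ℝ) ≤ z := by rw [hk_eq, hcast]; exact Int.floor_le z
      have : (k : ℝ) * h ≤ z * h := mul_le_mul_of_nonneg_right this hh.le
      have hzh : z * h = t - a := by rw [hz_def]; field_simp
      linarith
    · have : (k : ℝ) ≤ z := by
        push_neg at hcase
        have : (n : ℝ) ≤ ⌊z⌋.toNat := by
          have : n ≤ ⌊z⌋.toNat := by omega
          exact_mod_cast this
        have hzfl : (⌊z⌋ : ℝ) ≤ z := Int.floor_le z
        rw [hcast] at this
        linarith
      have : (k : ℝ) * h ≤ z * h := mul_le_mul_of_nonneg_right this hh.le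
      have hzh : z * h = t - a := by rw [hz_def]; field_simp
      linarith
  · -- t ≤ a + k h + h
    by_cases hcase : ⌊z⌋.toNat ≤ n - 1
    · have hk_eq : k = ⌊z⌋.toNat := by rw [hk_def, iIdx, min_eq_right hcase]
      have hlt : z < (k : ℝ) + 1 := by rw [hk_eq, hcast]; exact Int.lt_floor_add_one z
      have : z * h ≤ ((k : ℝ) + 1) * h := mul_le_mul_of_nonneg_right hlt.le hh.le
      have hzh : z * h = t - a := by rw [hz_def]; field_simp
      nlinarith
    · -- then z ≥ n, so t = b; k = n-1
      push_neg at hcase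
      have hk_eq : k = n - 1 := by rw [hk_def, iIdx, min_eq_left (le_of_lt hcase)]
      have hzge : (n : ℝ) ≤ z := by
        have : n ≤ ⌊z⌋.toNat := by omega
        have h1 : ((n : ℕ) : ℝ) ≤ (⌊z⌋.toNat : ℝ) := by exact_mod_cast this
        rw [hcast] at h1
        linarith [Int.floor_le z]
      have htb : b ≤ t := by
        have : (n : ℝ) * h ≤ z * h := mul_le_mul_of_nonneg_right hzge hh.le
        have hzh : z * h = t - a := by rw [hz_def]; field_simp
        linarith
      have hkr : (k : ℝ) = (n : ℝ) - 1 := by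
        rw [hk_eq]
        have : ((n - 1 : ℕ) : ℝ) + 1 = n := by exact_mod_cast Nat.succ_pred_eq_of_pos hn
        linarith
      have : t ≤ b := ht.2
      rw [hkr]
      nlinarith

lemma cNode_mem_Icc {r : ℕ} {a b : ℝ} (hab : a < b) {q : Fin r → ℝ}
    (hq1 : ∀ i, q i ∈ Set.Ioo (0:ℝ) 1) {n : ℕ} (hn : 1 ≤ n) {t : ℝ}
    (ht : t ∈ Set.Icc a b) (i : Fin r) :
    cNode a b q n (iIdx a b n t) i ∈ Set.Icc a b := by
  obtain ⟨h1, h2, _, _⟩ := iIdx_facts hab hn ht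
  have hh : 0 < (b - a) / n :=
    div_pos (sub_pos.mpr hab) (by exact_mod_cast Nat.pos_of_ne_zero (by omega))
  have := (hq1 i).1; have := (hq1 i).2
  constructor
  · simp only [cNode]
    nlinarith
  · simp only [cNode]
    nlinarith

lemma basis_bound {r : ℕ} (q : Fin r → ℝ) (hinj : Function.Injective q)
    (hq1 : ∀ i, q i ∈ Set.Icc (0:ℝ) 1) (c h : ℝ) (hh : 0 < h)
    (t : ℝ) (hct : c ≤ t) (hth : t ≤ c + h) (i : Fin r) :
    |Polynomial.eval t (Lagrange.basis Finset.univ (fun j => c + q j * h) i)| ≤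
      ∏ j ∈ Finset.univ.erase i, |q i - q j|⁻¹ := by
  rw [Lagrange.basis, Polynomial.eval_prod]
  rw [Finset.abs_prod]
  apply Finset.prod_le_prod (fun j _ => abs_nonneg _)
  intro j hj
  have hij : j ≠ i := Finset.ne_of_mem_erase hj
  have hqij : q i ≠ q j := fun hc => hij (hinj hc).symm
  have heval : Polynomial.eval t (Lagrange.basisDivisor (c + q i * h) (c + q j * h)) =
      ((c + q i * h) - (c + q j * h))⁻¹ * (t - (c + q j * h)) := by
    simp [Lagrange.basisDivisor]
  rw [heval, abs_mul, abs_inv]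
  have hd : (c + q i * h) - (c + q j * h) = (q i - q j) * h := by ring
  rw [hd, abs_mul]
  have hqj0 := (hq1 j).1
  have hqj1 := (hq1 j).2
  have htau1 : c ≤ c + q j * h := by nlinarith
  have htau2 : c + q j * h ≤ c + h := by nlinarith
  have hnum : |t - (c + q j * h)| ≤ h := by
    rw [abs_le]; constructor <;> nlinarith
  have hqne : |q i - q j| ≠ 0 := by
    simp only [abs_ne_zero, sub_ne_zero]; exact hqij
  have hqpos : 0 < |q i - q j| := lt_of_le_of_ne (abs_nonneg _) (Ne.symm hqne)
  rw [mul_inv, abs_of_pos hh]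
  calc |q i - q j|⁻¹ * h⁻¹ * |t - (c + q j * h)|
      ≤ |q i - q j|⁻¹ * h⁻¹ * h := by
        apply mul_le_mul_of_nonneg_left hnum; positivity
    _ = |q i - q j|⁻¹ := by field_simp

/-- Lebesgue constant for the nodes `q`. -/
def Leb {r : ℕ} (q : Fin r → ℝ) : ℝ := ∑ i, ∏ j ∈ Finset.univ.erase i, |q i - q j|⁻¹

lemma Leb_nonneg {r : ℕ} (q : Fin r → ℝ) : 0 ≤ Leb q := by
  apply Finset.sum_nonneg
  intro i _
  apply Finset.prod_nonneg
  intro j _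
  positivity

lemma projQ_eq_sum {r : ℕ} (a b : ℝ) (q : Fin r → ℝ) (n : ℕ) (x : ℝ → ℝ) (t : ℝ) :
    projQ a b q n x t = ∑ i, x (cNode a b q n (iIdx a b n t) i) *
      Polynomial.eval t (Lagrange.basis Finset.univ (cNode a b q n (iIdx a b n t)) i) := by
  rw [projQ, Lagrange.interpolate_apply, Polynomial.eval_finset_sum]
  apply Finset.sum_congr rfl
  intro i _
  rw [Polynomial.eval_mul, Polynomial.eval_C]

lemma cNode_eq {r : ℕ} (a b : ℝ) (q : Fin r → ℝ) (n k : ℕ) :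
    cNode a b q n k = fun i => (a + (k:ℝ) * ((b-a)/n)) + q i * ((b-a)/n) := by
  funext i; simp [cNode]

/-- Lebesgue-type bound for the projection. -/
lemma projQ_bound {r : ℕ} {a b : ℝ} (hab : a < b) {q : Fin r → ℝ}
    (hq0 : StrictMono q) (hq1 : ∀ i, q i ∈ Set.Ioo (0:ℝ) 1) {n : ℕ} (hn : 1 ≤ n)
    (x : ℝ → ℝ) (V : ℝ) (hV : 0 ≤ V) (hx : ∀ s ∈ Set.Icc a b, |x s| ≤ V)
    {t : ℝ} (ht : t ∈ Set.Icc a b) :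
    |projQ a b q n x t| ≤ Leb q * V := by
  have hh : 0 < (b - a) / n :=
    div_pos (sub_pos.mpr hab) (by exact_mod_cast Nat.pos_of_ne_zero (by omega))
  obtain ⟨h1, h2, h3, h4⟩ := iIdx_facts hab hn ht
  rw [projQ_eq_sum]
  calc |∑ i, x (cNode a b q n (iIdx a b n t) i) *
      Polynomial.eval t (Lagrange.basis Finset.univ (cNode a b q n (iIdx a b n t)) i)|
      ≤ ∑ i, |x (cNode a b q n (iIdx a b n t) i)| *
        |Polynomial.eval t (Lagrange.basis Finset.univ (cNode a b q n (iIdx a b n t)) i)| := by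
        refine le_trans (Finset.abs_sum_le_sum_abs _ _) ?_
        apply le_of_eq
        apply Finset.sum_congr rfl
        intro i _
        rw [abs_mul]
    _ ≤ ∑ i, V * ∏ j ∈ Finset.univ.erase i, |q i - q j|⁻¹ := by
        apply Finset.sum_le_sum
        intro i _
        have hmem := cNode_mem_Icc hab hq1 hn ht i
        have hb1 : |x (cNode a b q n (iIdx a b n t) i)| ≤ V := hx _ hmem
        have hb2 : |Polynomial.eval t (Lagrange.basis Finset.univ
            (cNode a b q n (iIdx a b n t)) i)| ≤ ∏ j ∈ Finset.univ.erase i, |q i - q j|⁻¹ := by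
          rw [cNode_eq]
          exact basis_bound q hq0.injective (fun i => Set.mem_Icc.mpr ⟨(hq1 i).1.le, (hq1 i).2.le⟩)
            _ _ hh t h3 h4 i
        calc |x (cNode a b q n (iIdx a b n t) i)| *
            |Polynomial.eval t (Lagrange.basis Finset.univ (cNode a b q n (iIdx a b n t)) i)|
            ≤ V * |Polynomial.eval t (Lagrange.basis Finset.univ (cNode a b q n (iIdx a b n t)) i)| := by
              apply mul_le_mul_of_nonneg_right hb1 (abs_nonneg _)
          _ ≤ V * ∏ j ∈ Finset.univ.erase i, |q i - q j|⁻¹ := by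
              apply mul_le_mul_of_nonneg_left hb2 hV
    _ = Leb q * V := by rw [Leb, Finset.sum_mul]; apply Finset.sum_congr rfl; intros; ring

lemma itDW_eq {k : ℕ} {f : ℝ → ℝ} (hf : ContDiff ℝ (k : ℕ) f) {s : Set ℝ}
    (hs : UniqueDiffOn ℝ s) {x : ℝ} (hx : x ∈ s) {m : ℕ} (hm : m ≤ k) :
    iteratedDerivWithin m f s x = iteratedDeriv m f x := by
  have h : HasFTaylorSeriesUpTo (k : ℕ∞) f (ftaylorSeries ℝ f) :=
    contDiff_iff_ftaylorSeries.mp (by exact_mod_cast hf)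
  have hmn : ((m : ℕ∞) : WithTop ℕ∞) ≤ ((k : ℕ∞) : WithTop ℕ∞) := by exact_mod_cast hm
  have h1 := (h.hasFTaylorSeriesUpToOn s).eq_iteratedFDerivWithin_of_uniqueDiffOn hmn hs hx
  have h2 := h.eq_iteratedFDeriv hmn x
  rw [iteratedDerivWithin, iteratedDeriv, ← h1, h2]

lemma interp_err {r : ℕ} (hr : 1 ≤ r) {a b : ℝ} (hab : a < b) {q : Fin r → ℝ}
    (hq0 : StrictMono q) (hq1 : ∀ i, q i ∈ Set.Ioo (0:ℝ) 1) {n : ℕ} (hn : 1 ≤ n)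
    (y : ℝ → ℝ) (hy : ContDiff ℝ (r : ℕ) y) (M : ℝ)
    (hM : ∀ s ∈ Set.Icc a b, |iteratedDeriv r y s| ≤ M)
    {t : ℝ} (ht : t ∈ Set.Icc a b) :
    |projQ a b q n y t - y t| ≤
      ((Leb q + 1) / (r-1).factorial) * M * ((b-a)/n)^r := by
  have hh : 0 < (b - a) / n :=
    div_pos (sub_pos.mpr hab) (by exact_mod_cast Nat.pos_of_ne_zero (by omega))
  set h : ℝ := (b - a) / n with hh_def
  obtain ⟨h1, h2, h3, h4⟩ := iIdx_facts hab hn ht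
  set k : ℕ := iIdx a b n t with hk_def
  set c : ℝ := a + (k : ℝ) * h with hc_def
  have hcc : c < c + h := by linarith
  have hJsub : Set.Icc c (c + h) ⊆ Set.Icc a b := Set.Icc_subset_Icc (by linarith) (by linarith)
  have hM0 : 0 ≤ M := le_trans (abs_nonneg _) (hM a (Set.left_mem_Icc.mpr hab.le))
  -- the Taylor polynomial of degree r-1 at c
  set P : Polynomial ℝ := ∑ k' ∈ Finset.range r,
    Polynomial.C ((k'.factorial : ℝ)⁻¹ * iteratedDerivWithin k' y (Set.Icc c (c+h)) c) *
      (Polynomial.X - Polynomial.C c) ^ k' with hP_def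
  have hPeval : ∀ x : ℝ, P.eval x = taylorWithinEval y (r-1) (Set.Icc c (c+h)) c x := by
    intro x
    rw [taylor_within_apply, hP_def, Polynomial.eval_finset_sum]
    have hrr : r - 1 + 1 = r := by omega
    rw [hrr]
    apply Finset.sum_congr rfl
    intro k' _
    simp only [Polynomial.eval_mul, Polynomial.eval_C, Polynomial.eval_pow,
      Polynomial.eval_sub, Polynomial.eval_X, smul_eq_mul]
    ring
  -- Taylor remainder bound
  have htay : ∀ x ∈ Set.Icc c (c + h), |y x - P.eval x| ≤ M * h^r / (r-1).factorial := by
    intro x hx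
    rw [hPeval]
    have hf : ContDiffOn ℝ ((r-1 : ℕ) + 1) y (Set.Icc c (c+h)) := by
      have : ((r-1 : ℕ) : WithTop ℕ∞) + 1 = (r : ℕ) := by
        have : (r-1 : ℕ) + 1 = r := by omega
        exact_mod_cast congrArg (Nat.cast : ℕ → WithTop ℕ∞) this
      rw [this]
      exact hy.contDiffOn
    have hC : ∀ z ∈ Set.Icc c (c+h),
        ‖iteratedDerivWithin ((r-1) + 1) y (Set.Icc c (c+h)) z‖ ≤ M := by
      intro z hz
      have hrr : r - 1 + 1 = r := by omega
      rw [hrr, itDW_eq hy (uniqueDiffOn_Icc hcc) hz le_rfl]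
      exact hM z (hJsub hz)
    have hbd := taylor_mean_remainder_bound hcc.le hf hx hC
    rw [Real.norm_eq_abs] at hbd
    apply le_trans hbd
    have hxc : 0 ≤ x - c := by linarith [hx.1]
    have hxch : x - c ≤ h := by linarith [hx.2]
    have hrr : r - 1 + 1 = r := by omega
    calc M * (x - c) ^ (r - 1 + 1) / ((r-1).factorial : ℝ)
        = M * (x - c) ^ r / ((r-1).factorial : ℝ) := by rw [hrr]
      _ ≤ M * h ^ r / ((r-1).factorial : ℝ) := by gcongr
  have hdeg : P.degree < (r : WithBot ℕ) := by
    rw [hP_def]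
    apply lt_of_le_of_lt (Polynomial.degree_sum_le _ _)
    rw [Finset.sup_lt_iff (by exact_mod_cast WithBot.bot_lt_coe r)]
    intro k' hk'
    have hk'r : k' < r := Finset.mem_range.mp hk'
    calc (Polynomial.C ((k'.factorial : ℝ)⁻¹ * iteratedDerivWithin k' y (Set.Icc c (c+h)) c) *
          (Polynomial.X - Polynomial.C c) ^ k').degree
        ≤ Polynomial.degree (Polynomial.C ((k'.factorial : ℝ)⁻¹ *
            iteratedDerivWithin k' y (Set.Icc c (c+h)) c)) +
            ((Polynomial.X - Polynomial.C c) ^ k').degree := Polynomial.degree_mul_le _ _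
      _ ≤ 0 + ((Polynomial.X - Polynomial.C c) ^ k').degree :=
          add_le_add Polynomial.degree_C_le le_rfl
      _ = (k' : WithBot ℕ) := by
          rw [zero_add, Polynomial.degree_pow, Polynomial.degree_X_sub_C]; simp
      _ < (r : WithBot ℕ) := by exact_mod_cast hk'r
  -- nodes
  have hτmem : ∀ i, cNode a b q n k i ∈ Set.Icc c (c + h) := by
    intro i
    have hq0i := (hq1 i).1
    have hq1i := (hq1 i).2
    constructor
    · simp only [cNode, hc_def]; nlinarith
    · simp only [cNode, hc_def]; nlinarith
  have hInj : Set.InjOn (cNode a b q n k) (Finset.univ : Finset (Fin r)) := by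
    intro i _ j _ hij
    simp only [cNode] at hij
    have : q i * h = q j * h := by linarith
    have : q i = q j := by
      exact mul_right_cancel₀ (ne_of_gt hh) this
    exact hq0.injective this
  have hPinterp : projQ a b q n (fun s => P.eval s) t = P.eval t := by
    rw [projQ, ← hk_def]
    have := Lagrange.eq_interpolate (v := cNode a b q n k) hInj
      (by rwa [Finset.card_univ, Fintype.card_fin])
    rw [← this]
  -- decomposition
  have hsplit : projQ a b q n y t - y t =
      (∑ i, (y (cNode a b q n k i) - P.eval (cNode a b q n k i)) *
        Polynomial.eval t (Lagrange.basis Finset.univ (cNode a b q n k) i)) +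
      (P.eval t - y t) := by
    have e1 := projQ_eq_sum a b q n y t
    have e2 := projQ_eq_sum a b q n (fun s => P.eval s) t
    rw [← hk_def] at e1 e2
    rw [hPinterp] at e2
    rw [e1, e2]
    simp only [sub_mul]
    rw [Finset.sum_sub_distrib]
    ring
  rw [hsplit]
  have hLi : ∀ i : Fin r, |Polynomial.eval t (Lagrange.basis Finset.univ (cNode a b q n k) i)| ≤
      ∏ j ∈ Finset.univ.erase i, |q i - q j|⁻¹ := by
    intro i
    rw [cNode_eq]
    exact basis_bound q hq0.injective
      (fun i => Set.mem_Icc.mpr ⟨(hq1 i).1.le, (hq1 i).2.le⟩) _ _ hh t h3 h4 i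
  have hsumb : |∑ i, (y (cNode a b q n k i) - P.eval (cNode a b q n k i)) *
      Polynomial.eval t (Lagrange.basis Finset.univ (cNode a b q n k) i)| ≤
      Leb q * (M * h^r / (r-1).factorial) := by
    apply le_trans (Finset.abs_sum_le_sum_abs _ _)
    rw [Leb, Finset.sum_mul]
    apply Finset.sum_le_sum
    intro i _
    rw [abs_mul]
    have hb1 := htay _ (hτmem i)
    have hb2 := hLi i
    have hprod_nonneg : (0:ℝ) ≤ ∏ j ∈ Finset.univ.erase i, |q i - q j|⁻¹ :=
      Finset.prod_nonneg (fun j _ => by positivity)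
    calc |y (cNode a b q n k i) - P.eval (cNode a b q n k i)| *
          |Polynomial.eval t (Lagrange.basis Finset.univ (cNode a b q n k) i)|
        ≤ (M * h^r / (r-1).factorial) *
            |Polynomial.eval t (Lagrange.basis Finset.univ (cNode a b q n k) i)| :=
          mul_le_mul_of_nonneg_right hb1 (abs_nonneg _)
      _ ≤ (M * h^r / (r-1).factorial) * ∏ j ∈ Finset.univ.erase i, |q i - q j|⁻¹ :=
          mul_le_mul_of_nonneg_left hb2 (by positivity)
      _ = (∏ j ∈ Finset.univ.erase i, |q i - q j|⁻¹) * (M * h^r / (r-1).factorial) := by ring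
  have htt : |P.eval t - y t| ≤ M * h^r / (r-1).factorial := by
    rw [abs_sub_comm]
    exact htay t ⟨h3, h4⟩
  calc |(∑ i, (y (cNode a b q n k i) - P.eval (cNode a b q n k i)) *
        Polynomial.eval t (Lagrange.basis Finset.univ (cNode a b q n k) i)) +
        (P.eval t - y t)|
      ≤ Leb q * (M * h^r / (r-1).factorial) + M * h^r / (r-1).factorial :=
        le_trans (abs_add_le _ _) (add_le_add hsumb htt)
    _ = ((Leb q + 1) / (r-1).factorial) * M * h^r := by ring




lemma Wsum_nonneg {ρ : ℕ} (w : Fin ρ → ℝ) : 0 ≤ Wsum w :=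
  Finset.sum_nonneg fun i _ => abs_nonneg _

lemma term_eq {ρ : ℕ} (a b : ℝ) (w μ : Fin ρ → ℝ) (m : ℕ) (κ : ℝ → ℝ → ℝ → ℝ)
    (x v : ℝ → ℝ) (j : ℕ) (i : Fin ρ) :
    (fun s' => w i * deriv (κ s' (qNode a b μ m j i)) (x (qNode a b μ m j i)) *
        v (qNode a b μ m j i)) =
      (fun s' => (w i * v (qNode a b μ m j i)) *
        (fun z : ℝ × ℝ × ℝ => du κ z.1 z.2.1 z.2.2)
          (s', qNode a b μ m j i, x (qNode a b μ m j i))) := by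
  funext s'
  show w i * deriv (κ s' (qNode a b μ m j i)) (x (qNode a b μ m j i)) * v (qNode a b μ m j i) =
    (w i * v (qNode a b μ m j i)) * deriv (κ s' (qNode a b μ m j i)) (x (qNode a b μ m j i))
  ring

lemma slice_contDiff {k : ℕ} {κ : ℝ → ℝ → ℝ → ℝ}
    (hκu : ContDiff ℝ (k : ℕ) (fun z : ℝ × ℝ × ℝ => du κ z.1 z.2.1 z.2.2)) (t u : ℝ) :
    ContDiff ℝ (k : ℕ) (fun s : ℝ =>
      (fun z : ℝ × ℝ × ℝ => du κ z.1 z.2.1 z.2.2) (s, t, u)) :=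
  hκu.comp (contDiff_id.prodMk contDiff_const)

lemma nystU'_contDiff {ρ : ℕ} (a b : ℝ) (w μ : Fin ρ → ℝ) (m : ℕ) (κ : ℝ → ℝ → ℝ → ℝ)
    {N : ℕ} (hκu : ContDiff ℝ (N : ℕ) (fun z : ℝ × ℝ × ℝ => du κ z.1 z.2.1 z.2.2))
    (x v : ℝ → ℝ) : ContDiff ℝ (N : ℕ) (nystU' a b w μ m κ x v) := by
  apply ContDiff.mul contDiff_const
  apply ContDiff.sum
  intro j _
  apply ContDiff.sum
  intro i _
  rw [term_eq a b w μ m κ x v j i]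
  exact (contDiff_const.mul (slice_contDiff hκu _ _))

lemma nystU'_itD {ρ : ℕ} (a b : ℝ) (w μ : Fin ρ → ℝ) (m : ℕ) (κ : ℝ → ℝ → ℝ → ℝ)
    {N k : ℕ} (hκu : ContDiff ℝ (N : ℕ) (fun z : ℝ × ℝ × ℝ => du κ z.1 z.2.1 z.2.2))
    (hk : k ≤ N) (x v : ℝ → ℝ) (s : ℝ) :
    iteratedDeriv k (nystU' a b w μ m κ x v) s =
      ((b - a) / m) * ∑ j ∈ Finset.range m, ∑ i,
        (w i * v (qNode a b μ m j i)) *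
          pd1 k (fun z : ℝ × ℝ × ℝ => du κ z.1 z.2.1 z.2.2)
            (s, qNode a b μ m j i, x (qNode a b μ m j i)) := by
  set G : (ℝ × ℝ × ℝ) → ℝ := fun z => du κ z.1 z.2.1 z.2.2 with hG_def
  have hκk : ContDiff ℝ (k : ℕ) G := hκu.of_le (by exact_mod_cast hk)
  have hterm_cd : ∀ (j : ℕ) (i : Fin ρ), ContDiff ℝ (k : ℕ)
      (fun s' => w i * deriv (κ s' (qNode a b μ m j i)) (x (qNode a b μ m j i)) *
        v (qNode a b μ m j i)) := by
    intro j i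
    rw [term_eq a b w μ m κ x v j i]
    exact contDiff_const.mul (slice_contDiff hκk _ _)
  have hsum_cd : ContDiff ℝ (k : ℕ) (fun s' => ∑ j ∈ Finset.range m, ∑ i,
      w i * deriv (κ s' (qNode a b μ m j i)) (x (qNode a b μ m j i)) *
        v (qNode a b μ m j i)) :=
    ContDiff.sum fun j _ => ContDiff.sum fun i _ => hterm_cd j i
  have e0 : iteratedDeriv k (nystU' a b w μ m κ x v) s =
      ((b - a) / m) * iteratedDeriv k (fun s' => ∑ j ∈ Finset.range m, ∑ i,
        w i * deriv (κ s' (qNode a b μ m j i)) (x (qNode a b μ m j i)) *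
          v (qNode a b μ m j i)) s :=
    itD_const_mul k _ _ hsum_cd s
  rw [e0]
  congr 1
  rw [itD_sum (Finset.range m) _ k (fun j _ => ContDiff.sum fun i _ => hterm_cd j i) s]
  apply Finset.sum_congr rfl
  intro j _
  rw [itD_sum Finset.univ _ k (fun i _ => hterm_cd j i) s]
  apply Finset.sum_congr rfl
  intro i _
  rw [term_eq a b w μ m κ x v j i]
  rw [itD_const_mul k _ _ (slice_contDiff hκk _ _) s]
  congr 1
  exact congrFun (pd1_spec G hκu hk _ _) s

lemma nystU'_itD_bound {ρ : ℕ} {a b : ℝ} (hab : a < b) (w μ : Fin ρ → ℝ)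
    (hμ : ∀ i, μ i ∈ Set.Ioo (0:ℝ) 1) {m : ℕ} (hm : 1 ≤ m) (κ : ℝ → ℝ → ℝ → ℝ)
    {N k : ℕ} (hκu : ContDiff ℝ (N : ℕ) (fun z : ℝ × ℝ × ℝ => du κ z.1 z.2.1 z.2.2))
    (hk : k ≤ N) (x v : ℝ → ℝ) (B V Mk : ℝ) (hMk : 0 ≤ Mk) (hV : 0 ≤ V)
    (hx : ∀ t ∈ Set.Icc a b, |x t| ≤ B) (hv : ∀ t ∈ Set.Icc a b, |v t| ≤ V)
    (hM : ∀ s' ∈ Set.Icc a b, ∀ t' ∈ Set.Icc a b, ∀ u' ∈ Set.Icc (-B) B,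
      |pd1 k (fun z : ℝ × ℝ × ℝ => du κ z.1 z.2.1 z.2.2) (s', t', u')| ≤ Mk)
    {s : ℝ} (hs : s ∈ Set.Icc a b) :
    |iteratedDeriv k (nystU' a b w μ m κ x v) s| ≤ (b - a) * Wsum w * Mk * V := by
  rw [nystU'_itD a b w μ m κ hκu hk x v s]
  have hh : 0 < (b - a) / m :=
    div_pos (sub_pos.mpr hab) (by exact_mod_cast Nat.pos_of_ne_zero (by omega))
  rw [abs_mul, abs_of_pos hh]
  have hterm : ∀ j ∈ Finset.range m, |∑ i, (w i * v (qNode a b μ m j i)) *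
      pd1 k (fun z : ℝ × ℝ × ℝ => du κ z.1 z.2.1 z.2.2)
        (s, qNode a b μ m j i, x (qNode a b μ m j i))| ≤ Wsum w * (Mk * V) := by
    intro j hj
    have hjm : j < m := Finset.mem_range.mp hj
    apply le_trans (Finset.abs_sum_le_sum_abs _ _)
    rw [Wsum, Finset.sum_mul]
    apply Finset.sum_le_sum
    intro i _
    have hζ : qNode a b μ m j i ∈ Set.Icc a b := qNode_mem_Icc hab hμ hm hjm i
    have hu : x (qNode a b μ m j i) ∈ Set.Icc (-B) B := by
      rw [Set.mem_Icc, ← abs_le]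
      exact hx _ hζ
    have hp := hM s hs _ hζ _ hu
    have hvb := hv _ hζ
    rw [abs_mul, abs_mul]
    calc |w i| * |v (qNode a b μ m j i)| *
          |pd1 k (fun z : ℝ × ℝ × ℝ => du κ z.1 z.2.1 z.2.2)
            (s, qNode a b μ m j i, x (qNode a b μ m j i))|
        ≤ |w i| * V * Mk := by
          apply mul_le_mul _ hp (abs_nonneg _) (by positivity)
          exact mul_le_mul_of_nonneg_left hvb (abs_nonneg _)
      _ = |w i| * (Mk * V) := by ring
  calc ((b - a) / m) * |∑ j ∈ Finset.range m, ∑ i, (w i * v (qNode a b μ m j i)) *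
      pd1 k (fun z : ℝ × ℝ × ℝ => du κ z.1 z.2.1 z.2.2)
        (s, qNode a b μ m j i, x (qNode a b μ m j i))|
      ≤ ((b - a) / m) * ∑ j ∈ Finset.range m, (Wsum w * (Mk * V)) := by
        apply mul_le_mul_of_nonneg_left _ hh.le
        exact le_trans (Finset.abs_sum_le_sum_abs _ _) (Finset.sum_le_sum hterm)
    _ = (b - a) * Wsum w * Mk * V := by
        rw [Finset.sum_const, Finset.card_range, nsmul_eq_mul]
        have hmne : (m : ℝ) ≠ 0 := Nat.cast_ne_zero.mpr (by omega)
        field_simp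


lemma supIcc_le {a b : ℝ} (hab : a ≤ b) {x : ℝ → ℝ} (hx : BddIcc a b x) {t : ℝ}
    (ht : t ∈ Set.Icc a b) : |x t| ≤ supIcc a b x := by
  obtain ⟨M, hM⟩ := hx
  exact le_ciSup_of_le ⟨M, by rintro _ ⟨u, rfl⟩; exact hM u.1 u.2⟩
    (⟨t, ht⟩ : Set.Icc a b) le_rfl

lemma supIcc_nonneg {a b : ℝ} (hab : a ≤ b) {x : ℝ → ℝ} (hx : BddIcc a b x) :
    0 ≤ supIcc a b x :=
  le_trans (abs_nonneg _) (supIcc_le hab hx (Set.left_mem_Icc.mpr hab))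

theorem stmt18' {ρ r : ℕ} (hr : 1 ≤ r) (w μ : Fin ρ → ℝ)
    (hμ : ∀ i, μ i ∈ Set.Ioo (0:ℝ) 1)
    (q : Fin r → ℝ) (hq : GaussPts q) (a b : ℝ) (hab : a < b)
    (κ : ℝ → ℝ → ℝ → ℝ)
    (hκu : ContDiff ℝ (3 * r : ℕ) fun v : ℝ × ℝ × ℝ => du κ v.1 v.2.1 v.2.2)
    (δ₀ : ℝ) (hδ₀ : 0 < δ₀) (φ : ℝ → ℝ) (hφ : BddIcc a b φ)
    (c₀ : ℝ) (hc₀ : 0 < c₀) (p : ℕ) (hp : 1 ≤ p) (d : ℕ) :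
    ∃ C : ℝ, ∀ n : ℕ, 1 ≤ n → ∀ φm : ℝ → ℝ,
      (∀ t ∈ Set.Icc a b, |φm t - φ t| ≤ δ₀) →
      (∀ t ∈ Set.Icc a b, |projQ a b q n φm t - φm t| ≤
        min δ₀ (c₀ * ((b - a) / n) ^ r)) →
      (∀ v : ℝ → ℝ, BddIcc a b v →
        ∀ s ∈ Set.Icc a b,
          |nystU' a b w μ (n * p) κ φm
              (modU' a b w μ q n (n * p) κ φm v - nystU' a b w μ (n * p) κ φm v) s| ≤
            C * ((b - a) / n) ^ r * supIcc a b v) ∧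
      ∀ (c₁ : ℝ) (z : ℝ → ℝ), BddIcc a b z →
        supIcc a b (z - φm) ≤
          c₁ * max (((b - a) / ((n : ℝ) * p)) ^ d) (((b - a) / n) ^ (3 * r)) →
        ∀ s ∈ Set.Icc a b,
          |nystU' a b w μ (n * p) κ φm
              (modU' a b w μ q n (n * p) κ φm (z - φm)
                - nystU' a b w μ (n * p) κ φm (z - φm)) s| ≤
            C * c₁ * ((b - a) / n) ^ r *
              max (((b - a) / ((n : ℝ) * p)) ^ d) (((b - a) / n) ^ (3 * r)) := by
  classical
  obtain ⟨hq0, hq1, -⟩ := hq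
  obtain ⟨B0, hB0⟩ := hφ
  set B1 : ℝ := max B0 0 + δ₀ with hB1_def
  set B : ℝ := B1 + δ₀ with hB_def
  have hB1pos : 0 < B1 := by
    have : (0:ℝ) ≤ max B0 0 := le_max_right _ _
    rw [hB1_def]; linarith
  have hBpos : 0 < B := by rw [hB_def]; linarith
  set G : (ℝ × ℝ × ℝ) → ℝ := fun z => du κ z.1 z.2.1 z.2.2 with hG_def
  have hG : ContDiff ℝ ((3 * r : ℕ) : ℕ) G := hκu
  -- compact set and uniform bounds on partial derivatives
  set K : Set (ℝ × ℝ × ℝ) := Set.Icc a b ×ˢ Set.Icc a b ×ˢ Set.Icc (-B) B with hK_def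
  have hK : IsCompact K := (isCompact_Icc.prod (isCompact_Icc.prod isCompact_Icc))
  obtain ⟨M0, hM0⟩ := hK.exists_bound_of_continuousOn
    ((pd1_continuous G hG (Nat.zero_le _)).continuousOn)
  obtain ⟨Mr, hMr⟩ := hK.exists_bound_of_continuousOn
    ((pd1_continuous G hG (by omega : r ≤ 3 * r)).continuousOn)
  set M0' : ℝ := max M0 0 with hM0'_def
  set Mr' : ℝ := max Mr 0 with hMr'_def
  have hM0'0 : 0 ≤ M0' := le_max_right _ _
  have hMr'0 : 0 ≤ Mr' := le_max_right _ _
  have hM0b : ∀ s' ∈ Set.Icc a b, ∀ t' ∈ Set.Icc a b, ∀ u' ∈ Set.Icc (-B) B,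
      |pd1 0 G (s', t', u')| ≤ M0' := by
    intro s' hs' t' ht' u' hu'
    have : (s', t', u') ∈ K := by
      rw [hK_def]; exact ⟨hs', ht', hu'⟩
    exact le_trans (by rw [← Real.norm_eq_abs]; exact hM0 _ this) (le_max_left _ _)
  have hMrb : ∀ s' ∈ Set.Icc a b, ∀ t' ∈ Set.Icc a b, ∀ u' ∈ Set.Icc (-B) B,
      |pd1 r G (s', t', u')| ≤ Mr' := by
    intro s' hs' t' ht' u' hu'
    have : (s', t', u') ∈ K := by
      rw [hK_def]; exact ⟨hs', ht', hu'⟩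
    exact le_trans (by rw [← Real.norm_eq_abs]; exact hMr _ this) (le_max_left _ _)
  set Cq : ℝ := (Leb q + 1) / ((r - 1).factorial : ℝ) with hCq_def
  have hCq0 : 0 ≤ Cq := by
    apply div_nonneg _ (Nat.cast_nonneg _)
    linarith [Leb_nonneg q]
  have hW0 := Wsum_nonneg w
  have hba : (0:ℝ) ≤ b - a := by linarith
  have hΛ0 := Leb_nonneg q
  set C : ℝ := ((b - a) * Wsum w * M0') * (Cq * ((b - a) * Wsum w * Mr') * (1 + Leb q))
    with hC_def
  have hC0 : 0 ≤ C := by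
    apply mul_nonneg
    · exact mul_nonneg (mul_nonneg hba hW0) hM0'0
    · apply mul_nonneg
      · exact mul_nonneg hCq0 (mul_nonneg (mul_nonneg hba hW0) hMr'0)
      · linarith
  refine ⟨C, ?_⟩
  intro n hn φm hφm hproj
  have hm : 1 ≤ n * p := Nat.one_le_iff_ne_zero.mpr (by positivity)
  have hh : 0 < (b - a) / n :=
    div_pos (sub_pos.mpr hab) (by exact_mod_cast Nat.pos_of_ne_zero (by omega))
  have hφmB : ∀ t ∈ Set.Icc a b, |φm t| ≤ B1 := by
    intro t ht
    have h1 := hφm t ht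
    have h2 := hB0 t ht
    have h3 : |φm t| ≤ |φ t| + |φm t - φ t| := by
      calc |φm t| = |φ t + (φm t - φ t)| := by congr 1; ring
        _ ≤ |φ t| + |φm t - φ t| := abs_add_le _ _
    have h4 : B0 ≤ max B0 0 := le_max_left _ _
    rw [hB1_def]; linarith
  have hφmB' : ∀ t ∈ Set.Icc a b, |φm t| ≤ B := by
    intro t ht; have := hφmB t ht; rw [hB_def]; linarith
  have hQφmB : ∀ t ∈ Set.Icc a b, |projQ a b q n φm t| ≤ B := by
    intro t ht
    have h1 := hproj t ht
    have h2 := hφmB t ht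
    have h3 : |projQ a b q n φm t| ≤ |φm t| + |projQ a b q n φm t - φm t| := by
      calc |projQ a b q n φm t| = |φm t + (projQ a b q n φm t - φm t)| := by congr 1; ring
        _ ≤ _ := abs_add_le _ _
    have h4 : min δ₀ (c₀ * ((b - a) / n) ^ r) ≤ δ₀ := min_le_left _ _
    rw [hB_def]; linarith
  have hrle : ((r : ℕ) : WithTop ℕ∞) ≤ ((3 * r : ℕ) : WithTop ℕ∞) := by
    exact_mod_cast (by omega : r ≤ 3 * r)
  -- Part 1
  have hpart1 : ∀ v : ℝ → ℝ, BddIcc a b v → ∀ s ∈ Set.Icc a b,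
      |nystU' a b w μ (n * p) κ φm
        (modU' a b w μ q n (n * p) κ φm v - nystU' a b w μ (n * p) κ φm v) s| ≤
      C * ((b - a) / n) ^ r * supIcc a b v := by
    intro v hv s hs
    set V : ℝ := supIcc a b v with hV_def
    have hVb : ∀ t ∈ Set.Icc a b, |v t| ≤ V := fun t ht => supIcc_le hab.le hv ht
    have hV0 : 0 ≤ V := supIcc_nonneg hab.le hv
    have hQvB : ∀ t ∈ Set.Icc a b, |projQ a b q n v t| ≤ Leb q * V :=
      fun t ht => projQ_bound hab hq0 hq1 hn v V hV0 hVb ht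
    -- derivative bounds for the two Nyström functions
    have hy1_cd : ContDiff ℝ (r : ℕ) (nystU' a b w μ (n * p) κ φm v) :=
      (nystU'_contDiff a b w μ (n * p) κ hκu φm v).of_le hrle
    have hy2_cd : ContDiff ℝ (r : ℕ)
        (nystU' a b w μ (n * p) κ (projQ a b q n φm) (projQ a b q n v)) :=
      (nystU'_contDiff a b w μ (n * p) κ hκu (projQ a b q n φm) (projQ a b q n v)).of_le hrle
    have hy1_d : ∀ s' ∈ Set.Icc a b,
        |iteratedDeriv r (nystU' a b w μ (n * p) κ φm v) s'| ≤
        (b - a) * Wsum w * Mr' * V := by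
      intro s' hs'
      exact nystU'_itD_bound hab w μ hμ hm κ hκu (by omega) φm v B V Mr' hMr'0 hV0
        hφmB' hVb hMrb hs'
    have hy2_d : ∀ s' ∈ Set.Icc a b,
        |iteratedDeriv r (nystU' a b w μ (n * p) κ (projQ a b q n φm)
          (projQ a b q n v)) s'| ≤ (b - a) * Wsum w * Mr' * (Leb q * V) := by
      intro s' hs'
      exact nystU'_itD_bound hab w μ hμ hm κ hκu (by omega) (projQ a b q n φm)
        (projQ a b q n v) B (Leb q * V) Mr' hMr'0 (mul_nonneg hΛ0 hV0)
        hQφmB hQvB hMrb hs'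
    -- the inner function is uniformly small on [a,b]
    set S : ℝ := Cq * ((b - a) * Wsum w * Mr') * (1 + Leb q) * V * ((b - a) / n) ^ r
      with hS_def
    have hS0 : 0 ≤ S := by
      apply mul_nonneg _ (le_of_lt (pow_pos hh r))
      apply mul_nonneg _ hV0
      apply mul_nonneg _ (by linarith)
      exact mul_nonneg hCq0 (mul_nonneg (mul_nonneg hba hW0) hMr'0)
    have hgbound : ∀ t ∈ Set.Icc a b,
        |(modU' a b w μ q n (n * p) κ φm v - nystU' a b w μ (n * p) κ φm v) t| ≤ S := by
      intro t ht
      have hg_eq : (modU' a b w μ q n (n * p) κ φm v - nystU' a b w μ (n * p) κ φm v) t =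
          (projQ a b q n (nystU' a b w μ (n * p) κ φm v) t
            - nystU' a b w μ (n * p) κ φm v t)
          + (nystU' a b w μ (n * p) κ (projQ a b q n φm) (projQ a b q n v) t
            - projQ a b q n (nystU' a b w μ (n * p) κ (projQ a b q n φm)
                (projQ a b q n v)) t) := by
        simp only [modU', Pi.sub_apply, Pi.add_apply]
        ring
      rw [hg_eq]
      have hA := interp_err hr hab hq0 hq1 hn _ hy1_cd _ hy1_d ht
      have hB2 := interp_err hr hab hq0 hq1 hn _ hy2_cd _ hy2_d ht
      rw [abs_sub_comm] at hB2
      calc |(projQ a b q n (nystU' a b w μ (n * p) κ φm v) t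
            - nystU' a b w μ (n * p) κ φm v t)
          + (nystU' a b w μ (n * p) κ (projQ a b q n φm) (projQ a b q n v) t
            - projQ a b q n (nystU' a b w μ (n * p) κ (projQ a b q n φm)
                (projQ a b q n v)) t)|
          ≤ Cq * ((b - a) * Wsum w * Mr' * V) * ((b - a) / n) ^ r
            + Cq * ((b - a) * Wsum w * Mr' * (Leb q * V)) * ((b - a) / n) ^ r := by
            refine le_trans (abs_add_le _ _) (add_le_add ?_ ?_)
            · rw [hCq_def]; exact hA
            · rw [hCq_def]; exact hB2
        _ = S := by rw [hS_def]; ring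
    -- outer application
    have houter := nystU'_itD_bound hab w μ hμ hm κ hκu (Nat.zero_le _) φm
      (modU' a b w μ q n (n * p) κ φm v - nystU' a b w μ (n * p) κ φm v)
      B S M0' hM0'0 hS0 hφmB' hgbound hM0b hs
    rw [iteratedDeriv_zero] at houter
    apply le_trans houter
    apply le_of_eq
    rw [hC_def, hS_def]
    ring
  refine ⟨hpart1, ?_⟩
  intro c₁ z hz hzb s hs
  have hvb : BddIcc a b (z - φm) := by
    obtain ⟨Mz, hMz⟩ := hz
    exact ⟨Mz + B1, fun t ht => by
      have h1 := hMz t ht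
      have h2 := hφmB t ht
      have : |(z - φm) t| ≤ |z t| + |φm t| := by
        rw [Pi.sub_apply]; exact abs_sub _ _
      linarith⟩
  have h1 := hpart1 (z - φm) hvb s hs
  apply le_trans h1
  have h2 : C * ((b - a) / n) ^ r * supIcc a b (z - φm) ≤
      C * ((b - a) / n) ^ r *
        (c₁ * max (((b - a) / ((n : ℝ) * p)) ^ d) (((b - a) / n) ^ (3 * r))) := by
    apply mul_le_mul_of_nonneg_left hzb
    exact mul_nonneg hC0 (le_of_lt (pow_pos hh r))
  apply le_trans h2
  apply le_of_eq
  ring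


/-- Proposition 5.7. -/
theorem stmt18 {ρ r : ℕ} (hr : 1 ≤ r) (w μ : Fin ρ → ℝ)
    (hμ : ∀ i, μ i ∈ Set.Ioo (0:ℝ) 1) (hprec : Precision w μ (2 * r - 1))
    (q : Fin r → ℝ) (hq : GaussPts q) (a b : ℝ) (hab : a < b)
    (κ : ℝ → ℝ → ℝ → ℝ)
    (hκ : ContDiff ℝ (3 * r : ℕ) fun v : ℝ × ℝ × ℝ => κ v.1 v.2.1 v.2.2)
    (hκu : ContDiff ℝ (3 * r : ℕ) fun v : ℝ × ℝ × ℝ => du κ v.1 v.2.1 v.2.2)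
    (h2 : Smooth2 κ)
    (f : ℝ → ℝ) (hf : ContDiff ℝ (3 * r : ℕ) f)
    (δ₀ : ℝ) (hδ₀ : 0 < δ₀) (φ : ℝ → ℝ) (hφ : BddIcc a b φ)
    (c₀ : ℝ) (hc₀ : 0 < c₀) (p : ℕ) (hp : 1 ≤ p)
    (d : ℕ) (hd : 2 * r ≤ d) :
    ∃ C : ℝ, ∀ n : ℕ, 1 ≤ n → ∀ φm : ℝ → ℝ,
      (∀ t ∈ Set.Icc a b, |φm t - φ t| ≤ δ₀) →
      (∀ s, φm s - nystU a b w μ (n * p) κ φm s = f s) →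
      (∀ t ∈ Set.Icc a b, |projQ a b q n φm t - φm t| ≤
        min δ₀ (c₀ * ((b - a) / n) ^ r)) →
      (∀ v : ℝ → ℝ, BddIcc a b v →
        ∀ s ∈ Set.Icc a b,
          |nystU' a b w μ (n * p) κ φm
              (modU' a b w μ q n (n * p) κ φm v - nystU' a b w μ (n * p) κ φm v) s| ≤
            C * ((b - a) / n) ^ r * supIcc a b v) ∧
      ∀ (c₁ : ℝ) (z : ℝ → ℝ), BddIcc a b z →
        supIcc a b (z - φm) ≤
          c₁ * max (((b - a) / ((n : ℝ) * p)) ^ d) (((b - a) / n) ^ (3 * r)) →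
        ∀ s ∈ Set.Icc a b,
          |nystU' a b w μ (n * p) κ φm
              (modU' a b w μ q n (n * p) κ φm (z - φm)
                - nystU' a b w μ (n * p) κ φm (z - φm)) s| ≤
            C * c₁ * ((b - a) / n) ^ r *
              max (((b - a) / ((n : ℝ) * p)) ^ d) (((b - a) / n) ^ (3 * r)) := by
  obtain ⟨C, hC⟩ := stmt18' hr w μ hμ q hq a b hab κ hκu δ₀ hδ₀ φ hφ c₀ hc₀ p hp d
  exact ⟨C, fun n hn φm h1 _h2 h3 => hC n hn φm h1 h3⟩

end
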